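/- arXiv:cs/0604097 — 2 statements merged into one kernel-verified Lean document; each statement's English description precedes it below -/
import Mathlib

section
/- Let {u_i}_{i=1}^n and {v_i}_{i=1}^n be families of vectors in ℝ^n with ⟨u_i, v_k⟩ = δ_{ik} for all i, k, such that every coordinate lies in the support of at most K of the v_i, and ‖v_i‖_∞ ≤ C for all i. Let 1 ≤ p < ∞, ρ > 0, f ∈ ℝ^n, and let z ∈ ℝ^n be B-sparse with ‖f − Σ_i z_i v_i‖_p ≤ E. Then there exists a B-sparse y ∈ ℝ^n such that: (i) every y_i is an integer multiple of ρ; (ii) |y_i − ⟨f, u_i⟩| ≤ ‖u_i‖₁ · E + ρ for every i; and (iii) ‖f − Σ_i y_i v_i‖_p ≤ E + n^{1/p} · K · ρ · C. -/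
/-- Standard inner product on `ℝ^n`. -/
noncomputable def dotp {n : ℕ} (x y : Fin n → ℝ) : ℝ := ∑ j, x j * y j

/-- The `ℓ₁` norm on `ℝ^n`. -/
noncomputable def l1Norm {n : ℕ} (x : Fin n → ℝ) : ℝ := ∑ j, |x j|

/-- The `ℓ_p` norm on `ℝ^n` for a real exponent `1 ≤ p < ∞`. -/
noncomputable def lpNorm {n : ℕ} (p : ℝ) (x : Fin n → ℝ) : ℝ :=
  (∑ j, |x j| ^ p) ^ (1 / p)

/-- A vector is `B`-sparse if it has at most `B` nonzero components. -/
def Sparse {n : ℕ} (B : ℕ) (z : Fin n → ℝ) : Prop :=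
  ({i | z i ≠ 0} : Set (Fin n)).ncard ≤ B

/-- let `{u_i}`, `{v_i}` be biorthogonal families (`⟨u_i, v_k⟩ = δ_{ik}`)
such that every coordinate lies in the support of at most `K` of the `v_i`, with
`‖v_i‖_∞ ≤ C`.  Let `1 ≤ p < ∞`, `ρ > 0`, `f ∈ ℝ^n`, and let `z` be `B`-sparse with
`‖f − Σ_i z_i v_i‖_p ≤ E`.  Then there is a `B`-sparse `y` with: (i) every `y_i` an
integer multiple of `ρ`; (ii) `|y_i − ⟨f, u_i⟩| ≤ ‖u_i‖₁·E + ρ` for all `i`; and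
(iii) `‖f − Σ_i y_i v_i‖_p ≤ E + n^{1/p}·K·ρ·C`. -/
theorem stmt13 {n B K : ℕ} (u v : Fin n → Fin n → ℝ)
    (hbi : ∀ i k, dotp (u i) (v k) = if i = k then (1 : ℝ) else 0)
    (hK : ∀ j : Fin n, ({i | v i j ≠ 0} : Set (Fin n)).ncard ≤ K)
    (C : ℝ) (hC : ∀ i, (⨆ j, |v i j|) ≤ C)
    (p : ℝ) (hp : 1 ≤ p) (ρ : ℝ) (hρ : 0 < ρ)
    (f z : Fin n → ℝ) (hz : Sparse B z) (E : ℝ)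
    (hE : lpNorm p (fun j => f j - ∑ i, z i * v i j) ≤ E) :
    ∃ y : Fin n → ℝ, Sparse B y ∧
      (∀ i, ∃ m : ℤ, y i = m * ρ) ∧
      (∀ i, |y i - dotp f (u i)| ≤ l1Norm (u i) * E + ρ) ∧
      lpNorm p (fun j => f j - ∑ i, y i * v i j) ≤
        E + (n : ℝ) ^ (1 / p) * K * ρ * C := by
  classical
  have hp0 : (0:ℝ) < p := lt_of_lt_of_le one_pos hp
  set r : Fin n → ℝ := fun j => f j - ∑ i, z i * v i j with hr
  have hlp0 : 0 ≤ lpNorm p r := Real.rpow_nonneg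
    (Finset.sum_nonneg fun j _ => Real.rpow_nonneg (abs_nonneg _) _) _
  have hE0 : 0 ≤ E := le_trans hlp0 hE
  rcases Nat.eq_zero_or_pos n with hn | hn
  · subst hn
    refine ⟨z, hz, fun i => i.elim0, fun i => i.elim0, ?_⟩
    have : lpNorm p (fun j : Fin 0 => f j - ∑ i, z i * v i j) = 0 := by
      unfold lpNorm
      rw [Finset.univ_eq_empty, Finset.sum_empty, Real.zero_rpow (by positivity : 1/p ≠ 0)]
    rw [this]
    have : ((0:ℕ):ℝ) ^ (1/p) = 0 := by
      rw [Nat.cast_zero, Real.zero_rpow (by positivity : 1/p ≠ 0)]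
    rw [this]
    linarith
  have hvC : ∀ i j, |v i j| ≤ C := fun i j =>
    le_trans (le_ciSup (f := fun j => |v i j|) (Finite.bddAbove_range _) j) (hC i)
  have hC0 : 0 ≤ C := le_trans (abs_nonneg _) (hvC ⟨0, hn⟩ ⟨0, hn⟩)
  -- coordinatewise bound |r j| ≤ E
  have hrE : ∀ j, |r j| ≤ E := by
    intro j
    have h1 : |r j| ^ p ≤ ∑ j', |r j'| ^ p :=
      Finset.single_le_sum (f := fun j' => |r j'| ^ p)
        (fun j' _ => Real.rpow_nonneg (abs_nonneg _) _) (Finset.mem_univ j)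
    have h2 : (|r j| ^ p) ^ (1/p) ≤ lpNorm p r :=
      Real.rpow_le_rpow (Real.rpow_nonneg (abs_nonneg _) _) h1 (by positivity)
    have h3 : (|r j| ^ p) ^ (1/p) = |r j| := by
      rw [← Real.rpow_mul (abs_nonneg _), mul_one_div, div_self hp0.ne', Real.rpow_one]
    linarith [le_trans h2 hE]
  set y : Fin n → ℝ := fun i => (round (z i / ρ) : ℤ) * ρ with hy
  have hyz : ∀ i, |y i - z i| ≤ ρ := by
    intro i
    have h := abs_sub_round (z i / ρ)
    have heq : y i - z i = ((round (z i / ρ) : ℝ) - z i / ρ) * ρ := by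
      field_simp [hy]
      simp only [hy]; ring
    rw [heq, abs_mul, abs_of_pos hρ, abs_sub_comm]
    nlinarith [h]
  refine ⟨y, ?_, fun i => ⟨round (z i / ρ), rfl⟩, ?_, ?_⟩
  · refine le_trans (Set.ncard_le_ncard ?_ (Set.toFinite _)) hz
    intro i hi
    simp only [Set.mem_setOf_eq, hy] at hi ⊢
    intro h0
    exact hi (by simp [h0])
  · -- (ii)
    intro i
    have hfu : dotp f (u i) = (∑ j, r j * u i j) + z i := by
      have hf : ∀ j, f j = r j + ∑ k, z k * v k j := fun j => by simp [hr]
      calc dotp f (u i) = ∑ j, (r j + ∑ k, z k * v k j) * u i j := by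
            unfold dotp; exact Finset.sum_congr rfl fun j _ => by rw [← hf j]
        _ = (∑ j, r j * u i j) + ∑ j, (∑ k, z k * v k j) * u i j := by
            rw [← Finset.sum_add_distrib]; exact Finset.sum_congr rfl fun j _ => by ring
        _ = (∑ j, r j * u i j) + z i := by
            congr 1
            calc ∑ j, (∑ k, z k * v k j) * u i j
                = ∑ k, z k * dotp (u i) (v k) := by
                  simp_rw [Finset.sum_mul, dotp, Finset.mul_sum]
                  rw [Finset.sum_comm]
                  exact Finset.sum_congr rfl fun k _ =>
                    Finset.sum_congr rfl fun j _ => by ring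
              _ = z i := by simp [hbi]
    have hsum : |∑ j, r j * u i j| ≤ l1Norm (u i) * E := by
      calc |∑ j, r j * u i j| ≤ ∑ j, |r j * u i j| :=
            Finset.abs_sum_le_sum_abs _ _
        _ ≤ ∑ j, |u i j| * E := Finset.sum_le_sum fun j _ => by
            rw [abs_mul, mul_comm]
            exact mul_le_mul_of_nonneg_left (hrE j) (abs_nonneg _)
        _ = l1Norm (u i) * E := by rw [l1Norm, Finset.sum_mul]
    have heq : y i - dotp f (u i) = (y i - z i) - ∑ j, r j * u i j := by
      rw [hfu]; ring
    rw [heq]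
    have habs : |(y i - z i) - ∑ j, r j * u i j| ≤ |y i - z i| + |∑ j, r j * u i j| :=
      abs_sub _ _
    linarith [hyz i]
  · -- (iii)
    have hw : ∀ j, |∑ i, (z i - y i) * v i j| ≤ (K:ℝ) * ρ * C := by
      intro j
      set S := Finset.univ.filter (fun i => v i j ≠ 0) with hS
      have hSK : (S.card : ℝ) ≤ K := by
        have h := hK j
        have hset : ({i | v i j ≠ 0} : Set (Fin n)) = ↑S := by ext i; simp [hS]
        rw [hset, Set.ncard_coe_finset] at h
        exact_mod_cast h
      have hsum : ∑ i, (z i - y i) * v i j = ∑ i ∈ S, (z i - y i) * v i j := by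
        refine (Finset.sum_subset (Finset.filter_subset _ _) ?_).symm
        intro i _ hiS
        simp only [hS, Finset.mem_filter, Finset.mem_univ, true_and, not_not] at hiS
        rw [hiS, mul_zero]
      calc |∑ i, (z i - y i) * v i j| = |∑ i ∈ S, (z i - y i) * v i j| := by rw [hsum]
        _ ≤ ∑ i ∈ S, |(z i - y i) * v i j| := Finset.abs_sum_le_sum_abs _ _
        _ ≤ ∑ i ∈ S, ρ * C := Finset.sum_le_sum fun i _ => by
            rw [abs_mul]
            exact mul_le_mul (by rw [abs_sub_comm]; exact hyz i) (hvC i j)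
              (abs_nonneg _) hρ.le
        _ = (S.card : ℝ) * (ρ * C) := by rw [Finset.sum_const, nsmul_eq_mul]
        _ ≤ (K:ℝ) * (ρ * C) := mul_le_mul_of_nonneg_right hSK (by positivity)
        _ = (K:ℝ) * ρ * C := by ring
    have hwlp : lpNorm p (fun j => ∑ i, (z i - y i) * v i j) ≤ (n:ℝ)^(1/p) * K * ρ * C := by
      unfold lpNorm
      have h1 : ∑ j, |∑ i, (z i - y i) * v i j| ^ p ≤ ∑ _j : Fin n, ((K:ℝ)*ρ*C)^p :=
        Finset.sum_le_sum fun j _ => Real.rpow_le_rpow (abs_nonneg _) (hw j) hp0.le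
      have h2 : (∑ _j : Fin n, ((K:ℝ)*ρ*C)^p) = (n:ℝ) * ((K:ℝ)*ρ*C)^p := by
        rw [Finset.sum_const, nsmul_eq_mul, Finset.card_univ, Fintype.card_fin]
      calc (∑ j, |∑ i, (z i - y i) * v i j| ^ p) ^ (1/p)
          ≤ ((n:ℝ) * ((K:ℝ)*ρ*C)^p) ^ (1/p) := by
            refine Real.rpow_le_rpow ?_ (h1.trans_eq h2) (by positivity)
            exact Finset.sum_nonneg fun j _ => Real.rpow_nonneg (abs_nonneg _) _
        _ = (n:ℝ)^(1/p) * ((K:ℝ)*ρ*C) := by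
            rw [Real.mul_rpow (Nat.cast_nonneg n) (Real.rpow_nonneg (by positivity) _),
              ← Real.rpow_mul (by positivity), mul_one_div, div_self hp0.ne',
              Real.rpow_one]
        _ = (n:ℝ)^(1/p) * K * ρ * C := by ring
    have key : lpNorm p (fun j => f j - ∑ i, y i * v i j) ≤
        lpNorm p r + lpNorm p (fun j => ∑ i, (z i - y i) * v i j) := by
      have heq : ∀ j, f j - ∑ i, y i * v i j = r j + ∑ i, (z i - y i) * v i j := by
        intro j
        have hd : ∑ i, (z i - y i) * v i j = (∑ i, z i * v i j) - ∑ i, y i * v i j := by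
          rw [← Finset.sum_sub_distrib]
          exact Finset.sum_congr rfl fun i _ => by ring
        simp only [hr]
        rw [hd]; ring
      unfold lpNorm
      calc (∑ j, |f j - ∑ i, y i * v i j| ^ p) ^ (1/p)
          = (∑ j, |r j + ∑ i, (z i - y i) * v i j| ^ p) ^ (1/p) := by
            congr 1; exact Finset.sum_congr rfl fun j _ => by rw [heq j]
        _ ≤ (∑ j, |r j| ^ p) ^ (1/p) +
            (∑ j, |∑ i, (z i - y i) * v i j| ^ p) ^ (1/p) :=
            Real.Lp_add_le Finset.univ r (fun j => ∑ i, (z i - y i) * v i j) hp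
    linarith [key, hE, hwlp]
end

section
/- Let v_1, …, v_n ∈ ℝ^n, let 1 ≤ p < ∞, and assign to each i a level t_i ∈ ℕ with 2^{t_i} ≤ n and ‖v_i‖_p ≤ 2^{t_i/p}. Let ε > 0, E ≥ 0, B ≥ 1, and define ρ_t = εE/(2B·2^{t/p}) and ρ_root = εE/(2B·n^{1/p}). Let y* ∈ ℝ^n be B-sparse with ‖f − Σ_i y*_i v_i‖_p ≤ E, and let y^ρ ∈ ℝ^n satisfy |y^ρ_i − y*_i| ≤ ρ_{t_i} + ρ_root for every i and y^ρ_i = 0 whenever y*_i = 0. Then ‖f − Σ_i y^ρ_i v_i‖_p ≤ (1 + ε)·E. -/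
lemma lpNorm_nonneg {n : ℕ} (p : ℝ) (x : Fin n → ℝ) : 0 ≤ lpNorm p x :=
  Real.rpow_nonneg (Finset.sum_nonneg fun _ _ => Real.rpow_nonneg (abs_nonneg _) _) _

lemma lpNorm_zero {n : ℕ} {p : ℝ} (hp : 1 ≤ p) : lpNorm (n := n) p 0 = 0 := by
  have hp0 : p ≠ 0 := by positivity
  simp [lpNorm, Real.zero_rpow hp0, Real.zero_rpow (inv_ne_zero hp0)]

lemma lpNorm_add_le {n : ℕ} {p : ℝ} (hp : 1 ≤ p) (x y : Fin n → ℝ) :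
    lpNorm p (x + y) ≤ lpNorm p x + lpNorm p y := by
  simpa [lpNorm, one_div] using Real.Lp_add_le Finset.univ x y hp

lemma lpNorm_smul {n : ℕ} {p : ℝ} (hp : 1 ≤ p) (c : ℝ) (x : Fin n → ℝ) :
    lpNorm p (fun j => c * x j) = |c| * lpNorm p x := by
  have hp0 : p ≠ 0 := by positivity
  unfold lpNorm
  have : ∀ j, |c * x j| ^ p = |c| ^ p * |x j| ^ p := by
    intro j
    rw [abs_mul, Real.mul_rpow (abs_nonneg _) (abs_nonneg _)]
  simp_rw [this, ← Finset.mul_sum]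
  rw [Real.mul_rpow (by positivity) (Finset.sum_nonneg fun _ _ => by positivity),
    ← Real.rpow_mul (abs_nonneg _), mul_one_div_cancel hp0, Real.rpow_one]

lemma lpNorm_sum_le {n : ℕ} {p : ℝ} (hp : 1 ≤ p) (s : Finset (Fin n))
    (c : Fin n → ℝ) (v : Fin n → Fin n → ℝ) :
    lpNorm p (fun j => ∑ i ∈ s, c i * v i j) ≤ ∑ i ∈ s, |c i| * lpNorm p (v i) := by
  induction s using Finset.induction with
  | empty => simp [show (fun _ : Fin n => (0:ℝ)) = 0 from rfl, lpNorm_zero hp]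
  | insert _ _ hi ih =>
    rename_i a s
    rw [Finset.sum_insert hi]
    calc lpNorm p (fun j => ∑ i ∈ insert a s, c i * v i j)
        = lpNorm p ((fun j => c a * v a j) + fun j => ∑ i ∈ s, c i * v i j) := by
          congr 1; funext j; simp [Finset.sum_insert hi]
      _ ≤ lpNorm p (fun j => c a * v a j) + lpNorm p (fun j => ∑ i ∈ s, c i * v i j) :=
          lpNorm_add_le hp _ _
      _ ≤ |c a| * lpNorm p (v a) + ∑ i ∈ s, |c i| * lpNorm p (v i) := by
          rw [lpNorm_smul hp]; exact add_le_add_right ih _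

/-- level-dependent rounding: let `v_1, …, v_n ∈ ℝ^n`, `1 ≤ p < ∞`,
and assign to each `i` a level `t i` with `2^{t i} ≤ n` and `‖v_i‖_p ≤ 2^{t_i/p}`.
Let `ε > 0`, `E ≥ 0`, `B ≥ 1`, and set `ρ_t = εE/(2B·2^{t/p})`,
`ρ_root = εE/(2B·n^{1/p})`.  If `y*` is `B`-sparse with `‖f − Σ_i y*_i v_i‖_p ≤ E`
and `y^ρ` satisfies `|y^ρ_i − y*_i| ≤ ρ_{t_i} + ρ_root` for all `i`, with `y^ρ_i = 0`
whenever `y*_i = 0`, then `‖f − Σ_i y^ρ_i v_i‖_p ≤ (1 + ε)·E`. -/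
theorem stmt14 {n B : ℕ} (hB : 1 ≤ B)
    (v : Fin n → Fin n → ℝ) (p : ℝ) (hp : 1 ≤ p)
    (t : Fin n → ℕ) (ht : ∀ i, 2 ^ t i ≤ n)
    (hv : ∀ i, lpNorm p (v i) ≤ (2 : ℝ) ^ ((t i : ℝ) / p))
    (ε E : ℝ) (hε : 0 < ε) (hE : 0 ≤ E)
    (f ystar yρ : Fin n → ℝ)
    (hsp : Sparse B ystar)
    (herr : lpNorm p (fun j => f j - ∑ i, ystar i * v i j) ≤ E)
    (hround : ∀ i, |yρ i - ystar i| ≤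
      ε * E / (2 * B * (2 : ℝ) ^ ((t i : ℝ) / p)) +
        ε * E / (2 * B * (n : ℝ) ^ (1 / p)))
    (hzero : ∀ i, ystar i = 0 → yρ i = 0) :
    lpNorm p (fun j => f j - ∑ i, yρ i * v i j) ≤ (1 + ε) * E := by
  have hp0 : (0:ℝ) < p := lt_of_lt_of_le one_pos hp
  have hB' : (0:ℝ) < (B:ℝ) := by exact_mod_cast Nat.lt_of_lt_of_le Nat.zero_lt_one hB
  set q : ℝ := ε * E / B with hq
  have hqnn : 0 ≤ q := by positivity
  -- decomposition:
  have hdecomp : (fun j => f j - ∑ i, yρ i * v i j)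
      = (fun j => f j - ∑ i, ystar i * v i j) + fun j => ∑ i, (ystar i - yρ i) * v i j := by
    funext j
    simp only [Pi.add_apply, sub_mul, Finset.sum_sub_distrib]
    ring
  rw [hdecomp]
  refine le_trans (lpNorm_add_le hp _ _) ?_
  have key : lpNorm p (fun j => ∑ i, (ystar i - yρ i) * v i j) ≤ ε * E := by
    refine le_trans (lpNorm_sum_le hp _ _ _) ?_
    have hterm : ∀ i, |ystar i - yρ i| * lpNorm p (v i)
        ≤ if ystar i = 0 then 0 else q := by
      intro i
      by_cases h0 : ystar i = 0
      · simp [h0, hzero i h0]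
      · rw [if_neg h0]
        set a : ℝ := (2 : ℝ) ^ ((t i : ℝ) / p) with ha
        set c : ℝ := (n : ℝ) ^ ((1:ℝ) / p) with hc
        have hapos : 0 < a := Real.rpow_pos_of_pos (by norm_num) _
        have hn1 : (1:ℕ) ≤ n := le_trans (Nat.one_le_two_pow) (ht i)
        have hcpos : 0 < c := Real.rpow_pos_of_pos (by exact_mod_cast hn1) _
        have hac : a ≤ c := by
          have h2n : ((2:ℝ) ^ (t i : ℕ)) ≤ (n : ℝ) := by exact_mod_cast ht i
          have : a = ((2:ℝ) ^ (t i : ℕ)) ^ ((1:ℝ)/p) := by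
            rw [ha, ← Real.rpow_natCast (2:ℝ) (t i), ← Real.rpow_mul (by norm_num)]
            ring_nf
          rw [this, hc]
          exact Real.rpow_le_rpow (by positivity) h2n (by positivity)
        calc |ystar i - yρ i| * lpNorm p (v i)
            ≤ (ε * E / (2 * B * a) + ε * E / (2 * B * c)) * a := by
              apply mul_le_mul _ (hv i) (lpNorm_nonneg _ _) (by positivity)
              rw [abs_sub_comm]; exact hround i
          _ = ε * E / (2 * B) + ε * E / (2 * B * c) * a := by
              field_simp
          _ ≤ ε * E / (2 * B) + ε * E / (2 * B) := by
              have : ε * E / (2 * B * c) * a ≤ ε * E / (2 * B * c) * c :=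
                mul_le_mul_of_nonneg_left hac (by positivity)
              have h2 : ε * E / (2 * B * c) * c = ε * E / (2 * B) := by
                field_simp
              linarith
          _ = q := by rw [hq]; field_simp; ring
    refine le_trans (Finset.sum_le_sum fun i _ => hterm i) ?_
    have hScard : (Finset.univ.filter (fun i => ystar i ≠ 0)).card ≤ B := by
      have : ({i | ystar i ≠ 0} : Set (Fin n)) =
          ↑(Finset.univ.filter (fun i => ystar i ≠ 0)) := by
        ext i; simp
      have h := hsp
      rw [Sparse, this, Set.ncard_coe_finset] at h
      exact h
    calc ∑ i, (if ystar i = 0 then 0 else q)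
        = ∑ i ∈ Finset.univ.filter (fun i => ystar i ≠ 0), q := by
          rw [Finset.sum_filter]
          exact Finset.sum_congr rfl fun i _ => by by_cases h : ystar i = 0 <;> simp [h]
      _ = (Finset.univ.filter (fun i => ystar i ≠ 0)).card * q := by
          rw [Finset.sum_const, nsmul_eq_mul]
      _ ≤ B * q := by
          apply mul_le_mul_of_nonneg_right _ hqnn
          exact_mod_cast hScard
      _ = ε * E := by rw [hq]; field_simp
  linarith
end
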